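/- arXiv:1907.04931 — 2 statements merged into one kernel-verified Lean document; each statement's English description precedes it below -/
import Mathlib

section
/- Let (Ω, P) be a probability space, let V be a nonempty finite set (of nodes), let S ⊆ Ω be a measurable event ("node v is sampled") with P(S) = p_v > 0, and for each u ∈ V let T_u ⊆ S be a measurable event ("edge (u,v) is sampled") with P(T_u) = p_{u,v} > 0. Let f be a positive integer, and for each u ∈ V let A_u ∈ ℝ be a scalar (the normalized adjacency weight Ã_{v,u}) and x_u ∈ ℝ^f a vector (the transformed feature). Define the aggregator normalization α_{u,v} = p_{u,v} / p_v. Then the conditional expectation given S of the random vector Σ_{u ∈ V} (A_u / α_{u,v}) · 1_{T_u} · x_u equals Σ_{u ∈ V} A_u · x_u; i.e., the aggregator-normalized subgraph aggregation is an unbiased estimator of the full-graph aggregation. -/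
open MeasureTheory ProbabilityTheory

/-- Proposition 1 (aggregator normalization): conditioned on node `v` being sampled
(event `S`), the subgraph aggregation normalized by `α_{u,v} = p_{u,v} / p_v` is an
unbiased estimator of the full-graph aggregation `∑ u, A u • x u`. -/
theorem aggregator_normalization_unbiased
    {Ω : Type*} [MeasurableSpace Ω] (P : Measure Ω) [IsProbabilityMeasure P]
    {V : Type*} [Fintype V] [Nonempty V]
    (S : Set Ω) (hSmeas : MeasurableSet S)
    (T : V → Set Ω) (hTmeas : ∀ u, MeasurableSet (T u)) (hTS : ∀ u, T u ⊆ S)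
    (pv : ℝ) (hpv : 0 < pv) (hPS : P S = ENNReal.ofReal pv)
    (p : V → ℝ) (hp : ∀ u, 0 < p u) (hPT : ∀ u, P (T u) = ENNReal.ofReal (p u))
    (f : ℕ) (hf : 0 < f)
    (A : V → ℝ) (x : V → EuclideanSpace ℝ (Fin f)) :
    ∫ ω, (∑ u, (A u / (p u / pv)) • ((T u).indicator (fun _ => (1 : ℝ)) ω) • x u) ∂(P[|S])
      = ∑ u, A u • x u := by
  have hPSne : P S ≠ 0 := by
    rw [hPS]; simp [ENNReal.ofReal_eq_zero, not_le, hpv]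
  have hprob : IsProbabilityMeasure (P[|S]) := cond_isProbabilityMeasure hPSne
  have hμT : ∀ u, (P[|S]) (T u) = ENNReal.ofReal (p u / pv) := by
    intro u
    rw [cond_apply hSmeas, Set.inter_eq_self_of_subset_right (hTS u), hPT, hPS,
      ENNReal.ofReal_div_of_pos hpv]
    rw [ENNReal.div_eq_inv_mul]
  have key : ∀ u : V,
      ∫ ω, (A u / (p u / pv)) • ((T u).indicator (fun _ => (1 : ℝ)) ω) • x u ∂(P[|S])
        = A u • x u := by
    intro u
    have : (fun ω => (A u / (p u / pv)) • ((T u).indicator (fun _ => (1 : ℝ)) ω) • x u)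
        = fun ω => ((A u / (p u / pv)) * (T u).indicator (fun _ => (1 : ℝ)) ω) • x u := by
      funext ω; rw [mul_smul]
    rw [this, integral_smul_const, integral_const_mul, integral_indicator_const (1:ℝ) (hTmeas u),
      measureReal_def, hμT u, smul_eq_mul, mul_one, ENNReal.toReal_ofReal (le_of_lt (div_pos (hp u) hpv))]
    rw [div_mul_cancel₀ _ (ne_of_gt (div_pos (hp u) hpv))]
  rw [integral_finset_sum]
  · exact Finset.sum_congr rfl fun u _ => key u
  · intro u _
    refine Integrable.smul (𝕜 := ℝ) (A u / (p u / pv)) (f := fun ω => ((T u).indicator (fun _ => (1 : ℝ)) ω) • x u) ?_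
    apply Integrable.smul_const
    exact (integrable_indicator_iff (hTmeas u)).mpr
      ((integrableOn_const_iff).mpr (Or.inr (by rw [hμT u]; exact ENNReal.ofReal_lt_top)))
end

section
/- Let (Ω, P) be a probability space, let E be a nonempty finite set, let L and n be positive integers, and for each ℓ ∈ {1,…,L} and e ∈ E let b_e^(ℓ) ∈ ℝ^n be a fixed vector; set B_e = Σ_{ℓ=1}^{L} b_e^(ℓ) and assume B_e ≠ 0 for all e ∈ E. Let m > 0 and define p*_e = m · ‖B_e‖ / (Σ_{e' ∈ E} ‖B_{e'}‖); assume p*_e ≤ 1 for all e. Let (X_e)_{e ∈ E} be an independent family of {0,1}-valued random variables with E[X_e] = p*_e, and let (Y_e)_{e ∈ E} be an independent family of {0,1}-valued random variables with E[Y_e] = p_e, where 0 < p_e ≤ 1 and Σ_{e ∈ E} p_e = m. Define for each coordinate i the random variables ζ*_i = Σ_{ℓ} Σ_{e} (b_{e,i}^(ℓ) / p*_e) X_e and ζ_i = Σ_{ℓ} Σ_{e} (b_{e,i}^(ℓ) / p_e) Y_e. Then Σ_{i=1}^{n} Var(ζ*_i) ≤ Σ_{i=1}^{n} Var(ζ_i);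 i.e., under independent edge sampling with expected number of sampled edges equal to m, the edge probabilities p_e = (m / Σ_{e'} ‖Σ_ℓ b_{e'}^(ℓ)‖) · ‖Σ_ℓ b_e^(ℓ)‖ minimize the sum of the variances of the coordinates of the estimator ζ. -/
open MeasureTheory ProbabilityTheory

/-- Total variance of a weighted sum of independent 0/1 indicators. -/
lemma aux_var {Ω : Type*} [MeasurableSpace Ω] (P : Measure Ω) [IsProbabilityMeasure P]
    {E : Type*} [Fintype E]
    (Z : E → Ω → ℝ) (hmeas : ∀ e, Measurable (Z e)) (h01 : ∀ e ω, Z e ω = 0 ∨ Z e ω = 1)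
    (hindep : iIndepFun Z P)
    (q : E → ℝ) (hEZ : ∀ e, ∫ ω, Z e ω ∂P = q e) (a : E → ℝ) :
    variance (fun ω => ∑ e, a e * Z e ω) P = ∑ e, a e ^ 2 * (q e - q e ^ 2) := by
  have hbd : ∀ e, ∀ ω, ‖Z e ω‖ ≤ 1 := by
    intro e ω; rcases h01 e ω with h | h <;> simp [h]
  have hZ2 : ∀ e, MemLp (Z e) 2 P := fun e =>
    (memLp_top_of_bound (hmeas e).aestronglyMeasurable 1
      (ae_of_all _ (hbd e))).mono_exponent le_top
  have hvarZ : ∀ e, variance (Z e) P = q e - q e ^ 2 := by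
    intro e
    rw [variance_eq_sub (hZ2 e)]
    have hsq : (Z e) ^ 2 = Z e := by
      funext ω
      rcases h01 e ω with h | h <;> simp [h]
    rw [hsq, hEZ e]
  have key : variance (fun ω => ∑ e, a e * Z e ω) P
      = ∑ e, variance (fun ω => a e * Z e ω) P := by
    have h := IndepFun.variance_sum (μ := P) (X := fun e ω => a e * Z e ω)
      (s := Finset.univ)
      (fun e _ => (hZ2 e).const_mul (a e))
      (fun i _ j _ hij =>
        (hindep.indepFun hij).comp (measurable_const_mul (a i)) (measurable_const_mul (a j)))
    rw [← h]
    congr 1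
    funext ω
    simp
  rw [key]
  refine Finset.sum_congr rfl fun e _ => ?_
  have := variance_const_mul (a e) (Z e) P
  rw [this, hvarZ e]

/-- Theorem 2 (optimal edge sampler): under independent edge sampling with expected
number of sampled edges `m`, the edge probabilities
`p*_e = m ⬝ ‖∑_ℓ b_e^(ℓ)‖ / ∑_{e'} ‖∑_ℓ b_{e'}^(ℓ)‖` minimize the sum of the
variances of the coordinates of the estimator `ζ`. -/
theorem optimal_edge_sampler
    {Ω : Type*} [MeasurableSpace Ω] (P : Measure Ω) [IsProbabilityMeasure P]
    {E : Type*} [Fintype E] [Nonempty E]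
    (L n : ℕ) (hL : 0 < L) (hn : 0 < n)
    (b : Fin L → E → EuclideanSpace ℝ (Fin n))
    (hB : ∀ e, (∑ ℓ : Fin L, b ℓ e) ≠ 0)
    (m : ℝ) (hm : 0 < m)
    (pstar : E → ℝ)
    (hpstar : ∀ e, pstar e = m * ‖∑ ℓ : Fin L, b ℓ e‖ / ∑ e', ‖∑ ℓ : Fin L, b ℓ e'‖)
    (hpstar1 : ∀ e, pstar e ≤ 1)
    (X : E → Ω → ℝ) (hXmeas : ∀ e, Measurable (X e))
    (hX01 : ∀ e ω, X e ω = 0 ∨ X e ω = 1)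
    (hXindep : iIndepFun X P)
    (hEX : ∀ e, ∫ ω, X e ω ∂P = pstar e)
    (p : E → ℝ) (hp0 : ∀ e, 0 < p e) (hp1 : ∀ e, p e ≤ 1) (hpsum : ∑ e, p e = m)
    (Y : E → Ω → ℝ) (hYmeas : ∀ e, Measurable (Y e))
    (hY01 : ∀ e ω, Y e ω = 0 ∨ Y e ω = 1)
    (hYindep : iIndepFun Y P)
    (hEY : ∀ e, ∫ ω, Y e ω ∂P = p e) :
    ∑ i : Fin n, variance (fun ω => ∑ ℓ : Fin L, ∑ e, (b ℓ e i / pstar e) * X e ω) P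
      ≤ ∑ i : Fin n, variance (fun ω => ∑ ℓ : Fin L, ∑ e, (b ℓ e i / p e) * Y e ω) P := by
  classical
  set B : E → EuclideanSpace ℝ (Fin n) := fun e => ∑ ℓ : Fin L, b ℓ e with hBdef
  have hBi : ∀ e (i : Fin n), B e i = ∑ ℓ : Fin L, b ℓ e i := by
    intro e i
    simp only [hBdef]
    rw [WithLp.ofLp_sum]
    exact Finset.sum_apply i Finset.univ _
  have hBpos : ∀ e, 0 < ‖B e‖ := fun e => norm_pos_iff.mpr (hB e)
  set S : ℝ := ∑ e', ‖B e'‖ with hSdef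
  have hS : 0 < S := Finset.sum_pos (fun e _ => hBpos e) Finset.univ_nonempty
  have hpstar0 : ∀ e, 0 < pstar e := by
    intro e
    rw [hpstar e]
    exact div_pos (mul_pos hm (hBpos e)) hS
  -- rewrite the double sums
  have hrw : ∀ (q : E → ℝ) (Z : E → Ω → ℝ) (i : Fin n),
      (fun ω => ∑ ℓ : Fin L, ∑ e, (b ℓ e i / q e) * Z e ω)
        = fun ω => ∑ e, (B e i / q e) * Z e ω := by
    intro q Z i
    funext ω
    rw [Finset.sum_comm]
    refine Finset.sum_congr rfl fun e _ => ?_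
    rw [hBi, ← Finset.sum_mul, ← Finset.sum_div]
  have hnorm : ∀ e, ∑ i, (B e i) ^ 2 = ‖B e‖ ^ 2 := by
    intro e
    rw [EuclideanSpace.norm_eq, Real.sq_sqrt (by positivity)]
    simp [Real.norm_eq_abs, sq_abs]
  -- reduce both sides to closed form
  have hvar : ∀ (q : E → ℝ), (∀ e, 0 < q e) →
      ∀ (Z : E → Ω → ℝ), (∀ e, Measurable (Z e)) → (∀ e ω, Z e ω = 0 ∨ Z e ω = 1) →
      iIndepFun Z P → (∀ e, ∫ ω, Z e ω ∂P = q e) →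
      ∑ i : Fin n, variance (fun ω => ∑ ℓ : Fin L, ∑ e, (b ℓ e i / q e) * Z e ω) P
        = ∑ e, ‖B e‖ ^ 2 / q e - ∑ e, ‖B e‖ ^ 2 := by
    intro q hq Z hZmeas hZ01 hZindep hEZ
    have : ∀ i : Fin n,
        variance (fun ω => ∑ ℓ : Fin L, ∑ e, (b ℓ e i / q e) * Z e ω) P
          = ∑ e, (B e i / q e) ^ 2 * (q e - q e ^ 2) := by
      intro i
      rw [hrw q Z i]
      exact aux_var P Z hZmeas hZ01 hZindep q hEZ _
    rw [Finset.sum_congr rfl fun i _ => this i, Finset.sum_comm, ← Finset.sum_sub_distrib]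
    refine Finset.sum_congr rfl fun e _ => ?_
    have hqe := (hq e).ne'
    have : ∑ i, (B e i / q e) ^ 2 * (q e - q e ^ 2)
        = (∑ i, (B e i) ^ 2) * ((q e - q e ^ 2) / q e ^ 2) := by
      rw [Finset.sum_mul]
      refine Finset.sum_congr rfl fun i _ => ?_
      field_simp
      try ring
    rw [this, hnorm e]
    field_simp
    try ring
  rw [hvar pstar hpstar0 X hXmeas hX01 hXindep hEX,
    hvar p hp0 Y hYmeas hY01 hYindep hEY]
  have hL1 : ∑ e, ‖B e‖ ^ 2 / pstar e = S ^ 2 / m := by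
    have : ∀ e, ‖B e‖ ^ 2 / pstar e = ‖B e‖ * S / m := by
      intro e
      rw [hpstar e]
      show ‖B e‖ ^ 2 / (m * ‖B e‖ / S) = ‖B e‖ * S / m
      have hne := (hBpos e).ne'
      field_simp
      try ring
    rw [Finset.sum_congr rfl fun e _ => this e, ← Finset.sum_div, ← Finset.sum_mul]
    rw [← hSdef]
    ring_nf
  have hCS : S ^ 2 ≤ (∑ e, ‖B e‖ ^ 2 / p e) * m := by
    have h := Finset.sum_mul_sq_le_sq_mul_sq Finset.univ
      (fun e => ‖B e‖ / Real.sqrt (p e)) (fun e => Real.sqrt (p e))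
    have h1 : ∀ e : E, ‖B e‖ / Real.sqrt (p e) * Real.sqrt (p e) = ‖B e‖ := by
      intro e
      rw [div_mul_cancel₀]
      exact (Real.sqrt_pos.mpr (hp0 e)).ne'
    have h2 : ∀ e : E, (‖B e‖ / Real.sqrt (p e)) ^ 2 = ‖B e‖ ^ 2 / p e := by
      intro e
      rw [div_pow, Real.sq_sqrt (hp0 e).le]
    have h3 : ∀ e : E, (Real.sqrt (p e)) ^ 2 = p e := fun e => Real.sq_sqrt (hp0 e).le
    simpa [h1, h2, h3, hpsum, hSdef] using h
  have : S ^ 2 / m ≤ ∑ e, ‖B e‖ ^ 2 / p e := by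
    rw [div_le_iff₀ hm]
    exact hCS
  linarith [hL1, this]
end
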